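/- arXiv:1809.04979 — 6 statements merged into one kernel-verified Lean document; each statement's English description precedes it below -/
import Mathlib

section
/- In a finite multi-objective game admitting an exact vector-valued potential function Φ, an action-profile a is a Pareto-Nash equilibrium if and only if a is locally efficient for Φ, i.e., Φ(a) is Pareto-efficient among the set {Φ(bⁱ, a⁻ⁱ) : i ∈ N, bⁱ ∈ Aⁱ}. -/
/-- Strict Pareto-dominance on `ℝᵈ`: `x` dominates `y`. -/
def ParetoDom {d : ℕ} (x y : Fin d → ℝ) : Prop :=
  (∀ k, y k ≤ x k) ∧ x ≠ y

/-- Pareto-Nash equilibrium of a multi-objective game. -/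
def IsPNE {n d : ℕ} {A : Fin n → Type*} (u : Fin n → (∀ i, A i) → Fin d → ℝ)
    (a : ∀ i, A i) : Prop :=
  ∀ i, ¬ ∃ b : A i, ParetoDom (u i (Function.update a i b)) (u i a)

/-- Local efficiency of a profile for a vector-valued function `Φ`. -/
def IsLocEff {n d : ℕ} {A : Fin n → Type*} (Φ : (∀ i, A i) → Fin d → ℝ)
    (a : ∀ i, A i) : Prop :=
  ¬ ∃ (i : Fin n) (b : A i), ParetoDom (Φ (Function.update a i b)) (Φ a)

/-- `Φ` is an exact vector-valued potential for the game `u`. -/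
def IsPotential {n d : ℕ} {A : Fin n → Type*} (u : Fin n → (∀ i, A i) → Fin d → ℝ)
    (Φ : (∀ i, A i) → Fin d → ℝ) : Prop :=
  ∀ (a : ∀ i, A i) (i : Fin n) (b : A i) (k : Fin d),
    Φ (Function.update a i b) k - Φ a k = u i (Function.update a i b) k - u i a k

lemma paretoDom_transfer {n d : ℕ} {A : Fin n → Type*}
    (u : Fin n → (∀ i, A i) → Fin d → ℝ) (Φ : (∀ i, A i) → Fin d → ℝ)
    (hΦ : IsPotential u Φ) (a : ∀ i, A i) (i : Fin n) (b : A i) :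
    ParetoDom (u i (Function.update a i b)) (u i a) ↔
      ParetoDom (Φ (Function.update a i b)) (Φ a) := by
  have hk : ∀ k, Φ (Function.update a i b) k - Φ a k
      = u i (Function.update a i b) k - u i a k := hΦ a i b
  constructor <;> rintro ⟨hle, hne⟩ <;> refine ⟨fun k => ?_, fun h => hne ?_⟩
  · have := hk k; have := hle k; linarith
  · funext k
    have h1 := congrFun h k
    have := hk k; linarith
  · have := hk k; have := hle k; linarith
  · funext k
    have h1 := congrFun h k
    have := hk k; linarith

/-- In a finite MO game with exact potential `Φ`, a profile is a Pareto-Nash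
equilibrium iff it is locally efficient for `Φ`. -/
theorem pne_iff_locEff {n d : ℕ} {A : Fin n → Type*} [∀ i, Fintype (A i)]
    (u : Fin n → (∀ i, A i) → Fin d → ℝ) (Φ : (∀ i, A i) → Fin d → ℝ)
    (hΦ : IsPotential u Φ) (a : ∀ i, A i) :
    IsPNE u a ↔ IsLocEff Φ a := by
  constructor
  · rintro h ⟨i, b, hd⟩
    exact h i ⟨b, (paretoDom_transfer u Φ hΦ a i b).mpr hd⟩
  · rintro h i ⟨b, hd⟩
    exact h ⟨i, b, (paretoDom_transfer u Φ hΦ a i b).mp hd⟩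
end

section
/- Every finite multi-objective game that admits an exact vector-valued potential function Φ has at least one Pareto-Nash equilibrium; equivalently, the set of locally efficient action-profiles of Φ over a finite nonempty set A is nonempty. -/
/-- A finite MO game admitting an exact potential has a Pareto-Nash equilibrium. -/
theorem exists_pne_of_potential {n d : ℕ} {A : Fin n → Type*}
    [∀ i, Fintype (A i)] [∀ i, Nonempty (A i)]
    (u : Fin n → (∀ i, A i) → Fin d → ℝ) (Φ : (∀ i, A i) → Fin d → ℝ)
    (hΦ : IsPotential u Φ) :
    ∃ a : ∀ i, A i, IsPNE u a := by
  obtain ⟨a, ha⟩ := Finite.exists_max (fun a : ∀ i, A i => ∑ k, Φ a k)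
  refine ⟨a, fun i ⟨b, hle, hne⟩ => ?_⟩
  set a' := Function.update a i b with ha'
  -- componentwise: Φ a k ≤ Φ a' k
  have hcomp : ∀ k, Φ a k ≤ Φ a' k := fun k => by
    have := hΦ a i b k
    have h := hle k
    linarith
  -- strict somewhere
  have hex : ∃ k, Φ a k < Φ a' k := by
    by_contra h
    push_neg at h
    apply hne
    funext k
    have h1 := hΦ a i b k
    have h2 : Φ a' k = Φ a k := le_antisymm (h k) (hcomp k)
    rw [h2] at h1
    linarith [hle k]
  obtain ⟨k₀, hk₀⟩ := hex
  have : ∑ k, Φ a k < ∑ k, Φ a' k :=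
    Finset.sum_lt_sum (fun k _ => hcomp k) ⟨k₀, Finset.mem_univ _, hk₀⟩
  exact absurd (ha a') (not_le.mpr this)
end

section
/- Let Y ⊆ ℝᵈ be a set of vectors such that for each coordinate k the projection {yₖ : y ∈ Y} has at most M distinct values. Then the set of Pareto-efficient elements of Y has cardinality at most M^{d-1}. -/
/-- Pareto-efficient elements of a set. -/
def EFF {d : ℕ} (X : Set (Fin d → ℝ)) : Set (Fin d → ℝ) :=
  {y ∈ X | ∀ x ∈ X, ¬ ParetoDom x y}

/-- If each coordinate projection of `Y ⊆ ℝᵈ` takes at most `M` values, then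
`Y` has at most `M^(d-1)` Pareto-efficient elements. -/
theorem eff_card_le {d M : ℕ} (hd : 1 ≤ d) (Y : Set (Fin d → ℝ))
    (hfin : ∀ k, ((fun y => y k) '' Y).Finite)
    (hM : ∀ k, ((fun y => y k) '' Y).ncard ≤ M) :
    (EFF Y).ncard ≤ M ^ (d - 1) := by
  classical
  set last : Fin d := ⟨d - 1, by omega⟩ with hlastdef
  set f : (Fin d → ℝ) → (Fin (d-1) → ℝ) :=
    fun y i => y (Fin.castLE (Nat.sub_le d 1) i) with hfdef
  have hinj : Set.InjOn f (EFF Y) := by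
    intro x hx y hy hxy
    by_contra hne
    have hagree : ∀ k : Fin d, k ≠ last → x k = y k := by
      intro k hk
      have hkne : (k : ℕ) ≠ d - 1 := fun h => hk (Fin.ext h)
      have hklt : (k : ℕ) < d - 1 := by have := k.isLt; omega
      have := congrFun hxy ⟨(k : ℕ), hklt⟩
      simpa [hfdef, Fin.ext_iff] using this
    have hlast : x last ≠ y last := by
      intro h
      apply hne
      funext k
      by_cases hk : k = last
      · rw [hk]; exact h
      · exact hagree k hk
    rcases lt_or_gt_of_ne hlast with h | h
    · -- y dominates x
      exact hx.2 y hy.1 ⟨fun k => by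
        by_cases hk : k = last
        · rw [hk]; exact le_of_lt h
        · exact le_of_eq (hagree k hk), Ne.symm hne⟩
    · -- x dominates y
      exact hy.2 x hx.1 ⟨fun k => by
        by_cases hk : k = last
        · rw [hk]; exact le_of_lt h
        · exact le_of_eq (hagree k hk).symm, hne⟩
  -- the image of EFF Y under f lies in a product of finite sets
  set t : Fin (d-1) → Finset ℝ :=
    fun i => (hfin (Fin.castLE (Nat.sub_le d 1) i)).toFinset with htdef
  have hsub : f '' (EFF Y) ⊆ ↑(Fintype.piFinset t) := by
    rintro g ⟨y, hy, rfl⟩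
    simp only [Finset.coe_sort_coe, Finset.mem_coe, Fintype.mem_piFinset]
    intro i
    simp only [htdef, Set.Finite.mem_toFinset]
    exact ⟨y, hy.1, rfl⟩
  have h1 : (EFF Y).ncard = (f '' (EFF Y)).ncard :=
    (Set.ncard_image_of_injOn hinj).symm
  have h2 : (f '' (EFF Y)).ncard ≤ (Fintype.piFinset t).card := by
    rw [← Set.ncard_coe_finset]
    exact Set.ncard_le_ncard hsub (Finset.finite_toSet _)
  have h3 : (Fintype.piFinset t).card ≤ M ^ (d - 1) := by
    rw [Fintype.card_piFinset]
    calc ∏ i, (t i).card ≤ ∏ _i : Fin (d-1), M := by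
          apply Finset.prod_le_prod'
          intro i _
          have := hM (Fin.castLE (Nat.sub_le d 1) i)
          rwa [Set.ncard_eq_toFinset_card _ (hfin _)] at this
      _ = M ^ (d - 1) := by simp
  omega
end

section
/- Given finite sets WST[E] = {y¹,...,y^q} ⊆ ℝ₊ᵈ and F = {z¹,...,z^m} ⊆ (ℝ₊∖{0})ᵈ, the set of guaranteed vectorial ratios R = ⋂_{t=1}^q ⋃_{z∈F} C(y^t / z) satisfies R = ⋃_{π : {1,...,q} → {1,...,m}} C(⋀_{t=1}^q y^t / z^{π(t)}), i.e., R is the cone-union generated by the set {⋀_{t=1}^q y^t / z^{π(t)} : π ∈ [m]^[q]}. -/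
/-- The cone of a nonnegative vector `x`: nonnegative vectors below `x`. -/
def Cone {d : ℕ} (x : Fin d → ℝ) : Set (Fin d → ℝ) :=
  {ρ | (∀ k, 0 ≤ ρ k) ∧ ∀ k, ρ k ≤ x k}

/-- The set of guaranteed vectorial ratios
`R = ⋂ₜ ⋃_z C(yᵗ/z)` is the cone-union generated by the componentwise minima
`⋀ₜ yᵗ / z^{π(t)}` over all selections `π`. -/
theorem ratios_eq_coneUnion_of_minima {d q m : ℕ} (hq : 0 < q)
    (y : Fin q → Fin d → ℝ) (z : Fin m → Fin d → ℝ)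
    (hy : ∀ t k, 0 ≤ y t k) (hz : ∀ s k, 0 < z s k) :
    (⋂ t : Fin q, ⋃ s : Fin m, Cone (fun k => y t k / z s k)) =
      ⋃ π : Fin q → Fin m, Cone (fun k => ⨅ t : Fin q, y t k / z (π t) k) := by
  haveI : Nonempty (Fin q) := ⟨⟨0, hq⟩⟩
  ext ρ
  simp only [Set.mem_iInter, Set.mem_iUnion, Cone, Set.mem_setOf_eq]
  constructor
  · intro h
    choose π hπ using fun t => (h t)
    rcases hπ (Classical.arbitrary (Fin q)) with ⟨hnn, _⟩
    refine ⟨π, hnn, fun k => le_ciInf fun t => (hπ t).2 k⟩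
  · rintro ⟨π, hnn, hle⟩ t
    exact ⟨π t, hnn, fun k =>
      (hle k).trans (ciInf_le (Set.Finite.bddBelow (Set.finite_range _)) t)⟩
end

section
/- With q = |WST[E]| and m = |F|, the set MO-CR = EFF[⋂_{t=1}^q ⋃_{z∈F} C(y^t/z)] has cardinality at most (qm)^{d-1}. -/
/-- The multi-objective coordination ratio
`MO-CR = EFF[⋂ₜ ⋃_z C(yᵗ/z)]` has at most `(qm)^{d-1}` elements. -/
theorem mocr_card_le {d q m : ℕ} (hd : 1 ≤ d) (hq : 0 < q) (hm : 0 < m)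
    (y : Fin q → Fin d → ℝ) (z : Fin m → Fin d → ℝ)
    (hy : ∀ t k, 0 ≤ y t k) (hz : ∀ s k, 0 < z s k) :
    (EFF (⋂ t : Fin q, ⋃ s : Fin m, Cone (fun k => y t k / z s k))).ncard ≤
      (q * m) ^ (d - 1) := by
  classical
  obtain ⟨e, rfl⟩ : ∃ e, d = e + 1 := ⟨d - 1, (Nat.succ_pred_eq_of_pos hd).symm⟩
  have : Nonempty (Fin q) := ⟨⟨0, hq⟩⟩
  set X := ⋂ t : Fin q, ⋃ s : Fin m, Cone (fun k => y t k / z s k) with hX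
  set V : Fin (e+1) → Finset ℝ :=
    fun k => Finset.image (fun p : Fin q × Fin m => y p.1 k / z p.2 k) Finset.univ with hV
  have hVcard : ∀ k, (V k).card ≤ q * m := by
    intro k
    calc (V k).card ≤ (Finset.univ : Finset (Fin q × Fin m)).card := Finset.card_image_le
    _ = q * m := by simp
  -- every coordinate of an EFF element lies in V
  have hcoord : ∀ x ∈ EFF X, ∀ k, x k ∈ V k := by
    intro x hx k
    obtain ⟨hxX, hmax⟩ := hx
    have hsel : ∀ t : Fin q, ∃ s : Fin m, x ∈ Cone (fun k => y t k / z s k) := by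
      intro t
      have := Set.mem_iInter.mp hxX t
      simpa [Set.mem_iUnion] using this
    choose σ hσ using hsel
    set b := Finset.univ.inf' Finset.univ_nonempty
      (fun t : Fin q => y t k / z (σ t) k) with hb
    have hxb : x k ≤ b := Finset.le_inf' _ _ (fun t _ => (hσ t).2 k)
    have h0b : 0 ≤ b := le_trans ((hσ (Classical.arbitrary _)).1 k) hxb
    have hbk : x k = b := by
      by_contra hne
      set x' := Function.update x k b with hx'
      have hx'X : x' ∈ X := by
        rw [hX, Set.mem_iInter]
        intro t
        rw [Set.mem_iUnion]
        refine ⟨σ t, ?_, ?_⟩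
        · intro k'
          by_cases h : k' = k
          · subst h; simpa [hx'] using h0b
          · simpa [hx', Function.update_of_ne h] using (hσ t).1 k'
        · intro k'
          by_cases h : k' = k
          · subst h; simpa [hx'] using Finset.inf'_le _ (Finset.mem_univ t)
          · simpa [hx', Function.update_of_ne h] using (hσ t).2 k'
      refine hmax x' hx'X ⟨fun k' => ?_, ?_⟩
      · by_cases h : k' = k
        · subst h; simpa [hx'] using hxb
        · simp [hx', Function.update_of_ne h]
      · intro hEq
        have := congrFun hEq k
        simp [hx'] at this
        exact hne this.symm
    obtain ⟨t, -, ht⟩ := Finset.exists_mem_eq_inf' (Finset.univ_nonempty)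
      (fun t : Fin q => y t k / z (σ t) k)
    rw [hbk, hb, ht]
    exact Finset.mem_image.mpr ⟨(t, σ t), Finset.mem_univ _, rfl⟩
  -- EFF is an antichain, so projecting away the last coordinate is injective
  set f : (Fin (e+1) → ℝ) → (Fin e → ℝ) := fun x => x ∘ Fin.castSucc with hf
  have hinj : Set.InjOn f (EFF X) := by
    intro a ha b hb hab
    obtain ⟨haX, hamax⟩ := ha
    obtain ⟨hbX, hbmax⟩ := hb
    have hcast : ∀ k : Fin (e+1), k ≠ Fin.last e → a k = b k := by
      intro k hk
      obtain ⟨i, rfl⟩ := Fin.exists_castSucc_eq.mpr hk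
      exact congrFun hab i
    have hle : ∀ u v : Fin (e+1) → ℝ, (∀ k ≠ Fin.last e, u k = v k) →
        u (Fin.last e) ≤ v (Fin.last e) → ∀ k, u k ≤ v k := by
      intro u v h1 h2 k
      by_cases h : k = Fin.last e
      · subst h; exact h2
      · exact le_of_eq (h1 k h)
    rcases le_total (a (Fin.last e)) (b (Fin.last e)) with h | h
    · by_contra hne
      exact hamax b hbX ⟨hle a b hcast h, fun hEq => hne (hEq.symm)⟩
    · by_contra hne
      exact hbmax a haX ⟨hle b a (fun k hk => (hcast k hk).symm) h, hne⟩
  set T := Fintype.piFinset (fun i : Fin e => V (Fin.castSucc i)) with hT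
  have himg : f '' EFF X ⊆ ↑T := by
    rintro g ⟨x, hx, rfl⟩
    simp only [hT, Finset.coe_sort_coe, Set.mem_setOf_eq, Finset.mem_coe,
      Fintype.mem_piFinset]
    intro i
    exact hcoord x hx _
  have key : (EFF X).ncard ≤ (q * m) ^ e := by
    calc (EFF X).ncard = (f '' EFF X).ncard := (Set.ncard_image_of_injOn hinj).symm
      _ ≤ (↑T : Set (Fin e → ℝ)).ncard := Set.ncard_le_ncard himg T.finite_toSet
      _ = T.card := Set.ncard_coe_finset T
      _ = ∏ i : Fin e, (V (Fin.castSucc i)).card := Fintype.card_piFinset _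
      _ ≤ ∏ _i : Fin e, (q * m) :=
          Finset.prod_le_prod' (fun i _ => hVcard _)
      _ = (q * m) ^ e := by simp
  simpa using key
end

section
/- Let E, F, 𝓔, 𝓕 ⊆ ℝ₊ᵈ and ε₁, ε₂ > 0 satisfy: (i) for every y ∈ 𝓔 there is y' ∈ E with y ≽ y'; (ii) for every y' ∈ E there is y ∈ 𝓔 with (1+ε₁)y' ≽ y; (iii) for every z' ∈ F there is z ∈ 𝓕 with z' ≽ z; (iv) for every z ∈ 𝓕 there is z' ∈ F with (1+ε₂)z ≽ z'. Define R[𝓔,𝓕] = {ρ ∈ ℝ₊ᵈ : ∀y ∈ 𝓔, ∃z ∈ 𝓕, y ≽ ρ⋆z} (with componentwise product ⋆), and similarly R[E,F]. Then R[E,F] ⊆ R[𝓔,𝓕], and for every ρ ∈ R[𝓔,𝓕] the vector ρ' = (1+ε₁)⁻¹(1+ε₂)⁻¹ ρ belongs to R[E,F]; in particular (1+ε₁)(1+ε₂)ρ' ≽ ρ. -/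
/-- The set of guaranteed vectorial ratios of `E` to `F`. -/
def Ratios {d : ℕ} (E F : Set (Fin d → ℝ)) : Set (Fin d → ℝ) :=
  {ρ | (∀ k, 0 ≤ ρ k) ∧ ∀ y ∈ E, ∃ z ∈ F, ∀ k, ρ k * z k ≤ y k}

/-- Approximation lemma: under-coverings of equilibria and stick-coverings of
efficient outcomes transfer approximation guarantees to the ratio set. -/
theorem ratios_approx {d : ℕ} (E F 𝓔 𝓕 : Set (Fin d → ℝ)) (ε₁ ε₂ : ℝ)
    (hε₁ : 0 < ε₁) (hε₂ : 0 < ε₂)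
    (h1 : ∀ y ∈ 𝓔, ∃ y' ∈ E, ∀ k, y' k ≤ y k)
    (h2 : ∀ y' ∈ E, ∃ y ∈ 𝓔, ∀ k, y k ≤ (1 + ε₁) * y' k)
    (h3 : ∀ z' ∈ F, ∃ z ∈ 𝓕, ∀ k, z k ≤ z' k)
    (h4 : ∀ z ∈ 𝓕, ∃ z' ∈ F, ∀ k, z' k ≤ (1 + ε₂) * z k) :
    Ratios E F ⊆ Ratios 𝓔 𝓕 ∧
    ∀ ρ ∈ Ratios 𝓔 𝓕,
      (fun k => (1 + ε₁)⁻¹ * (1 + ε₂)⁻¹ * ρ k) ∈ Ratios E F ∧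
      (∀ k, ρ k ≤ (1 + ε₁) * (1 + ε₂) * ((1 + ε₁)⁻¹ * (1 + ε₂)⁻¹ * ρ k)) := by
  have h1p : (0:ℝ) < 1 + ε₁ := by linarith
  have h2p : (0:ℝ) < 1 + ε₂ := by linarith
  constructor
  · rintro ρ ⟨hnn, hρ⟩
    refine ⟨hnn, fun y hy => ?_⟩
    obtain ⟨y', hy'E, hy'⟩ := h1 y hy
    obtain ⟨z', hz'F, hz'⟩ := hρ y' hy'E
    obtain ⟨z, hz𝓕, hz⟩ := h3 z' hz'F
    exact ⟨z, hz𝓕, fun k =>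
      le_trans (le_trans (mul_le_mul_of_nonneg_left (hz k) (hnn k)) (hz' k)) (hy' k)⟩
  · rintro ρ ⟨hnn, hρ⟩
    have hnn' : ∀ k, 0 ≤ (1 + ε₁)⁻¹ * (1 + ε₂)⁻¹ * ρ k := fun k => by have := hnn k; positivity
    refine ⟨⟨hnn', fun y' hy'E => ?_⟩, fun k => le_of_eq (by field_simp)⟩
    obtain ⟨y, hy𝓔, hy⟩ := h2 y' hy'E
    obtain ⟨z, hz𝓕, hz⟩ := hρ y hy𝓔
    obtain ⟨z', hz'F, hz'⟩ := h4 z hz𝓕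
    refine ⟨z', hz'F, fun k => ?_⟩
    have step1 : (1 + ε₁)⁻¹ * (1 + ε₂)⁻¹ * ρ k * z' k
        ≤ (1 + ε₁)⁻¹ * (1 + ε₂)⁻¹ * ρ k * ((1 + ε₂) * z k) :=
      mul_le_mul_of_nonneg_left (hz' k) (hnn' k)
    have heq : (1 + ε₁)⁻¹ * (1 + ε₂)⁻¹ * ρ k * ((1 + ε₂) * z k)
        = (1 + ε₁)⁻¹ * (ρ k * z k) := by field_simp
    have step2 : (1 + ε₁)⁻¹ * (ρ k * z k) ≤ (1 + ε₁)⁻¹ * y k :=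
      mul_le_mul_of_nonneg_left (hz k) (by positivity)
    have step3 : (1 + ε₁)⁻¹ * y k ≤ y' k := by
      rw [inv_mul_le_iff₀ h1p]; exact hy k
    calc (1 + ε₁)⁻¹ * (1 + ε₂)⁻¹ * ρ k * z' k ≤ _ := step1
      _ = _ := heq
      _ ≤ _ := step2
      _ ≤ _ := step3
end
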